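/- Let b'(t_b) = b + t_b·v and c'(t_c) = c + t_c·w where v, w ∈ ℝ² are directions with v ∧ w ≠ 0, and let a ∈ ℝ². The condition that the derivative of the area of triangle a b'(t_b) c'(t_c) along the constrained family (the quantity Q₊₊ = 0) defines an implicit relation between t_b and t_c of the form β t_b − γ t_c + α t_b t_c = 0, where α = v ∧ w, β = v ∧ (c − a/2 − b/2), γ = w ∧ (b − a/2 − c/2), and x ∧ y denotes x₁y₂ − y₁x₂. -/

import Mathlib

noncomputable section
open Set Real

/-- Points in the plane. -/
abbrev Pt : Type := ℝ × ℝ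

/-- 2D wedge (cross) product. -/
def wedge (p q : Pt) : ℝ := p.1 * q.2 - p.2 * q.1

/-- Euclidean dot product on the plane. -/
def dotp (p q : Pt) : ℝ := p.1 * q.1 + p.2 * q.2

/-- Euclidean length in the plane. -/
def elen (p : Pt) : ℝ := Real.sqrt (p.1 ^ 2 + p.2 ^ 2)

/-- The unit normal to the segment from `b` to `c` obtained by rotating `c - b`
by `-90°` (for a counter-clockwise triangle `abc` this points away from `a`). -/
def nhat (b c : Pt) : Pt := (elen (c - b))⁻¹ • ((c.2 - b.2, b.1 - c.1) : Pt)

/-- Twice the signed area of the triangle `a b'(h) c'(h)`, where `b'(h)` and `c'(h)`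
are the intersections of the line through `b`, `c` translated by `‖c-b‖·h·u` with the
lines `b + ℝv` and `c + ℝw`. Its derivative at `h = 0` is the area derivative `Q`. -/
def slideFam (a b c v w u : Pt) : ℝ → ℝ := fun h =>
  wedge ((b + (elen (c - b) * h / dotp v u) • v) - a)
        ((c + (elen (c - b) * h / dotp w u) • w) - a)

lemma slide_hasDerivAt (a b c v w u : Pt) :
    HasDerivAt (slideFam a b c v w u)
      (elen (c - b) / dotp v u * wedge v (c - a)
        + elen (c - b) / dotp w u * wedge (b - a) w) 0 := by
  have heq : slideFam a b c v w u = fun h : ℝ =>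
      wedge (b - a) (c - a)
      + (elen (c - b) / dotp v u * wedge v (c - a)
          + elen (c - b) / dotp w u * wedge (b - a) w) * h
      + (elen (c - b) / dotp v u * (elen (c - b) / dotp w u) * wedge v w) * h ^ 2 := by
    funext h
    simp only [slideFam, wedge, Prod.fst_sub, Prod.snd_sub, Prod.fst_add, Prod.snd_add,
      Prod.smul_fst, Prod.smul_snd, smul_eq_mul, div_eq_mul_inv]
    ring
  rw [heq]
  have h1 := ((hasDerivAt_id (0:ℝ)).const_mul
      (elen (c - b) / dotp v u * wedge v (c - a)
        + elen (c - b) / dotp w u * wedge (b - a) w)).add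
    ((hasDerivAt_pow 2 (0:ℝ)).const_mul
      (elen (c - b) / dotp v u * (elen (c - b) / dotp w u) * wedge v w))
  have h2 := (hasDerivAt_const (0:ℝ) (wedge (b - a) (c - a))).add h1
  refine HasDerivAt.congr_deriv (h2.congr_of_eventuallyEq (Filter.Eventually.of_forall fun x => ?_)) ?_
  · simp only [Pi.add_apply, id_eq]; ring
  · simp

lemma dotp_nhat (p b c : Pt) :
    dotp p (nhat b c) = (elen (c - b))⁻¹ * wedge p (c - b) := by
  simp only [dotp, nhat, wedge, Prod.smul_fst, Prod.smul_snd, Prod.fst_sub, Prod.snd_sub,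
    smul_eq_mul]
  ring

lemma elen_pos {b c : Pt} (h : b ≠ c) : 0 < elen (c - b) := by
  unfold elen
  apply Real.sqrt_pos.mpr
  have h' : (c - b).1 ≠ 0 ∨ (c - b).2 ≠ 0 := by
    by_contra hc
    push_neg at hc
    simp only [Prod.fst_sub, Prod.snd_sub, sub_eq_zero] at hc
    exact h (Prod.ext hc.1.symm hc.2.symm)
  rcases h' with h' | h'
  · nlinarith [sq_nonneg (c - b).2, sq_abs (c - b).1, abs_pos.mpr h', sq_nonneg (|(c-b).1| - 1)]
  · nlinarith [sq_nonneg (c - b).1, sq_abs (c - b).2, abs_pos.mpr h', sq_nonneg (|(c-b).2| - 1)]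

lemma cancel {L dv dw Wv Wb Wvcb Wwcb q : ℝ} (hL : L ≠ 0) (hdv : dv ≠ 0) (hdw : dw ≠ 0)
    (h1 : dv = L⁻¹ * Wvcb) (h2 : dw = L⁻¹ * Wwcb)
    (h : L / dv * Wv + L / dw * Wb = q) :
    Wwcb * Wv + Wvcb * Wb = dv * dw * q := by
  subst h1; subst h2
  have hWv : Wvcb ≠ 0 := by intro h0; exact hdv (by rw [h0, mul_zero])
  have hWw : Wwcb ≠ 0 := by intro h0; exact hdw (by rw [h0, mul_zero])
  rw [← h]
  field_simp

/-- For `b'(t_b) = b + t_b v`, `c'(t_c) = c + t_c w` with `v ∧ w ≠ 0`,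
the stationarity condition `Q₊₊ = 0` (vanishing of the area derivative along the
constrained family) defines the implicit relation `β t_b - γ t_c + α t_b t_c = 0`,
with `α = v ∧ w`, `β = v ∧ (c - a/2 - b/2)`, `γ = w ∧ (b - a/2 - c/2)`. -/
theorem stmt_10 (a b c v w : Pt) (hα : wedge v w ≠ 0)
    (α β γ : ℝ) (hαdef : α = wedge v w)
    (hβdef : β = wedge v (c - (2:ℝ)⁻¹ • a - (2:ℝ)⁻¹ • b))
    (hγdef : γ = wedge w (b - (2:ℝ)⁻¹ • a - (2:ℝ)⁻¹ • c))
    (hccw0 : 0 < wedge (b - a) (c - a)) (hbc0 : b ≠ c)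
    (hv0 : dotp v (nhat b c) ≠ 0) (hw0 : dotp w (nhat b c) ≠ 0)
    (hQ0 : HasDerivAt (slideFam a b c v w (nhat b c)) 0 0) :
    ∀ tb tc : ℝ,
      (0 < wedge ((b + tb • v) - a) ((c + tc • w) - a)) →
      b + tb • v ≠ c + tc • w →
      dotp v (nhat (b + tb • v) (c + tc • w)) ≠ 0 →
      dotp w (nhat (b + tb • v) (c + tc • w)) ≠ 0 →
      ∀ q : ℝ,
        HasDerivAt (slideFam a (b + tb • v) (c + tc • w) v w
          (nhat (b + tb • v) (c + tc • w))) q 0 →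
        (q = 0 ↔ β * tb - γ * tc + α * tb * tc = 0) := by
  intro tb tc _ hne' hv' hw' q hq
  have hL : elen (c - b) ≠ 0 := ne_of_gt (elen_pos hbc0)
  have hL' : elen ((c + tc • w) - (b + tb • v)) ≠ 0 := ne_of_gt (elen_pos hne')
  have hz := hQ0.unique (slide_hasDerivAt a b c v w (nhat b c))
  have hq2 := hq.unique (slide_hasDerivAt a (b + tb • v) (c + tc • w) v w
    (nhat (b + tb • v) (c + tc • w)))
  have hE0 := cancel hL hv0 hw0 (dotp_nhat v b c) (dotp_nhat w b c) hz.symm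
  have hE' := cancel hL' hv' hw'
    (dotp_nhat v (b + tb • v) (c + tc • w)) (dotp_nhat w (b + tb • v) (c + tc • w)) hq2.symm
  subst hαdef hβdef hγdef
  simp only [wedge, Prod.fst_sub, Prod.snd_sub, Prod.fst_add, Prod.snd_add,
    Prod.smul_fst, Prod.smul_snd, smul_eq_mul, mul_zero] at hE0 hE' ⊢
  constructor
  · intro hq0
    subst hq0
    have key : 2 * (v.1 * w.2 - v.2 * w.1) *
        ((v.1 * (c.2 - 2⁻¹ * a.2 - 2⁻¹ * b.2) - v.2 * (c.1 - 2⁻¹ * a.1 - 2⁻¹ * b.1)) * tb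
          - (w.1 * (b.2 - 2⁻¹ * a.2 - 2⁻¹ * c.2) - w.2 * (b.1 - 2⁻¹ * a.1 - 2⁻¹ * c.1)) * tc
          + (v.1 * w.2 - v.2 * w.1) * tb * tc) = 0 := by
      rw [mul_zero] at hE'
      linear_combination hE' - hE0
    have h2α : (2:ℝ) * (v.1 * w.2 - v.2 * w.1) ≠ 0 := by
      have : wedge v w = v.1 * w.2 - v.2 * w.1 := rfl
      rw [this] at hα
      exact mul_ne_zero two_ne_zero hα
    exact (mul_eq_zero.mp key).resolve_left h2α
  · intro hrel
    have hE'0 : dotp v (nhat (b + tb • v) (c + tc • w)) *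
        dotp w (nhat (b + tb • v) (c + tc • w)) * q = 0 := by
      rw [← hE']
      linear_combination hE0 + 2 * (v.1 * w.2 - v.2 * w.1) * hrel
    rcases mul_eq_zero.mp hE'0 with h | h
    · exact absurd h (mul_ne_zero hv' hw')
    · exact h
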